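/- Let A be a Banach algebra and X a norm-closed introverted sub-bimodule of A* contained in WAP(A). Then the two Arens products on A** induce the same well-defined product on X* = A**/X^⊥, and with this product X* is a dual Banach algebra (multiplication is separately weak*-continuous). -/

import Mathlib

set_option maxHeartbeats 1000000


open Metric

variable {𝔄 : Type*} [NonUnitalNormedRing 𝔄] [NormedSpace ℂ 𝔄]
  [IsScalarTower ℂ 𝔄 𝔄] [SMulCommClass ℂ 𝔄 𝔄]

/-- The map `a ↦ μ·a` where `⟨μ·a, b⟩ = μ(ab)`. -/
noncomputable def dotLmap (μ : 𝔄 →L[ℂ] ℂ) : 𝔄 →L[ℂ] (𝔄 →L[ℂ] ℂ) :=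
  (ContinuousLinearMap.compL ℂ 𝔄 𝔄 ℂ μ).comp (ContinuousLinearMap.mul ℂ 𝔄)

/-- The map `a ↦ a·μ` where `⟨a·μ, b⟩ = μ(ba)`. -/
noncomputable def dotRmap (μ : 𝔄 →L[ℂ] ℂ) : 𝔄 →L[ℂ] (𝔄 →L[ℂ] ℂ) :=
  (ContinuousLinearMap.compL ℂ 𝔄 𝔄 ℂ μ).comp ((ContinuousLinearMap.mul ℂ 𝔄).flip)

/-- Weak compactness of a map: the image of the closed unit ball is relatively compact
in the weak topology of the codomain. -/
def IsWeaklyCompactMap {E F : Type*} [NormedAddCommGroup E] [NormedSpace ℂ E]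
    [NormedAddCommGroup F] [NormedSpace ℂ F] (T : E → F) : Prop :=
  IsCompact (closure ((toWeakSpace ℂ F) '' (T '' closedBall (0 : E) 1)))

/-- Finite-dimensional step of Goldstine's theorem. -/
lemma goldstine_finset {𝔄 : Type*} [NormedAddCommGroup 𝔄] [NormedSpace ℂ 𝔄]
    (Φ : (𝔄 →L[ℂ] ℂ) →L[ℂ] ℂ) (hΦ : ‖Φ‖ ≤ 1)
    (s : Finset (𝔄 →L[ℂ] ℂ)) {ε : ℝ} (hε : 0 < ε) :
    ∃ a : 𝔄, ‖a‖ ≤ 1 ∧ ∀ η ∈ s, ‖Φ η - η a‖ < ε := by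
  classical
  set P : 𝔄 → (↥s → ℂ) := fun a k => (k : 𝔄 →L[ℂ] ℂ) a with hP
  set C : Set (↥s → ℂ) := P '' closedBall (0 : 𝔄) 1 with hC
  have hCconv : Convex ℝ C := by
    have hlin : IsLinearMap ℝ P := by
      constructor
      · intro a b; funext k; simp [P]
      · intro c a; funext k; simp [P]
    exact (convex_closedBall _ _).is_linear_image hlin
  set z : ↥s → ℂ := fun k => Φ (k : 𝔄 →L[ℂ] ℂ) with hz
  have hzmem : z ∈ closure C := by
    by_contra hzc
    obtain ⟨f, u, hfC, hfz⟩ :=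
      geometric_hahn_banach_closed_point (hCconv.closure) isClosed_closure hzc
    -- extract complex coefficients of the real functional f
    set w : ↥s → ℂ := fun k =>
      ((f (Pi.single k 1) : ℂ) - Complex.I * (f (Pi.single k Complex.I) : ℂ)) with hw
    have key : ∀ y : ↥s → ℂ, f y = (∑ k, w k * y k).re := by
      intro y
      have hy : y = ∑ k : ↥s, (Pi.single k (y k) : ↥s → ℂ) := by
        funext j; simp [Finset.sum_apply, Pi.single_apply]
      conv_lhs => rw [hy]
      rw [map_sum, Complex.re_sum]
      refine Finset.sum_congr rfl fun k _ => ?_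
      have hyk : (Pi.single k (y k) : ↥s → ℂ) =
          (y k).re • (Pi.single k (1 : ℂ) : ↥s → ℂ)
            + (y k).im • (Pi.single k Complex.I : ↥s → ℂ) := by
        funext j
        rcases eq_or_ne j k with h | h
        · subst h; simp [Complex.ext_iff]
        · simp [Pi.single_apply, h]
      rw [hyk, map_add, map_smul, map_smul]
      simp only [hw, smul_eq_mul, Complex.sub_re, Complex.mul_re, Complex.mul_im,
        Complex.ofReal_re, Complex.ofReal_im, Complex.I_re, Complex.I_im,
        Complex.sub_im, Complex.ofReal_im]
      ring
    set η : 𝔄 →L[ℂ] ℂ := ∑ k, w k • (k : 𝔄 →L[ℂ] ℂ) with hη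
    have hPf : ∀ a : 𝔄, f (P a) = (η a).re := by
      intro a
      rw [key]
      congr 1
      simp [η, ContinuousLinearMap.sum_apply, P]
    have hzf : f z = (Φ η).re := by
      rw [key]
      congr 1
      simp [η, z, map_sum]
    have hu0 : 0 < u := by
      have := hfC (P 0) (subset_closure ⟨0, by simp, rfl⟩)
      rwa [hPf, map_zero, Complex.zero_re] at this
    have hball : ∀ b : 𝔄, ‖b‖ ≤ 1 → (η b).re < u := by
      intro b hb
      have hmem : b ∈ closedBall (0 : 𝔄) 1 := by simpa [dist_eq_norm] using hb
      have := hfC (P b) (subset_closure ⟨b, hmem, rfl⟩)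
      rwa [hPf] at this
    have hηnorm : ‖η‖ ≤ u := by
      refine ContinuousLinearMap.opNorm_le_bound' _ hu0.le fun a ha => ?_
      have ha0 : (0:ℝ) < ‖a‖ := lt_of_le_of_ne (norm_nonneg a) (Ne.symm ha)
      rcases eq_or_ne (η a) 0 with h0 | h0
      · rw [h0]; simp; positivity
      · set θ : ℂ := (starRingEnd ℂ) (η a) / (‖η a‖ : ℂ) with hθ
        set b : 𝔄 := (θ * (‖a‖ : ℂ)⁻¹) • a with hb
        have hθ1 : ‖θ‖ = 1 := by
          rw [hθ, norm_div, RCLike.norm_conj]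
          have h1 : ‖((‖η a‖ : ℝ) : ℂ)‖ = ‖η a‖ := by
            rw [Complex.norm_real, Real.norm_eq_abs, abs_of_nonneg (norm_nonneg _)]
          rw [h1, div_self (norm_ne_zero_iff.mpr h0)]
        have hbnorm : ‖b‖ ≤ 1 := by
          have : ‖b‖ = 1 := by
            rw [hb, norm_smul, norm_mul, hθ1, one_mul, norm_inv, Complex.norm_real,
              Real.norm_eq_abs, abs_of_pos ha0, inv_mul_cancel₀ ha]
          exact this.le
        have hηb : η b = ((‖η a‖ * ‖a‖⁻¹ : ℝ) : ℂ) := by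
          rw [hb, map_smul, smul_eq_mul, hθ]
          have hconj : (starRingEnd ℂ) (η a) * η a = ((‖η a‖ : ℝ) : ℂ) ^ 2 := by
            rw [Complex.conj_mul']
          have hne : ((‖η a‖ : ℝ) : ℂ) ≠ 0 := by
            exact_mod_cast norm_ne_zero_iff.mpr h0
          have hne' : ((‖a‖ : ℝ) : ℂ) ≠ 0 := by exact_mod_cast ha
          field_simp
          rw [Complex.ofReal_div]; field_simp
          exact hconj
        have := hball b hbnorm
        rw [hηb] at this
        simp only [Complex.ofReal_re] at this
        calc ‖η a‖ = (‖η a‖ * ‖a‖⁻¹) * ‖a‖ := by field_simp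
          _ ≤ u * ‖a‖ := by nlinarith [norm_nonneg (η a)]
    have hcontr : (Φ η).re ≤ u := by
      calc (Φ η).re ≤ ‖Φ η‖ := Complex.re_le_norm _
        _ ≤ ‖Φ‖ * ‖η‖ := Φ.le_opNorm η
        _ ≤ 1 * u := mul_le_mul hΦ hηnorm (norm_nonneg η) zero_le_one
        _ = u := one_mul u
    rw [hzf] at hfz
    linarith
  -- extract an approximating point
  obtain ⟨y, hyC, hyd⟩ := Metric.mem_closure_iff.mp hzmem ε hε
  obtain ⟨a, haB, rfl⟩ := hyC
  refine ⟨a, by simpa [dist_eq_norm] using haB, fun η hη => ?_⟩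
  have h1 := dist_le_pi_dist z (P a) ⟨η, hη⟩
  have h2 : dist (z ⟨η, hη⟩) (P a ⟨η, hη⟩) < ε := lt_of_le_of_lt h1 hyd
  simpa [z, P, dist_eq_norm] using h2

lemma arens_norm_le_one (μ : 𝔄 →L[ℂ] ℂ)
    (hwc : IsWeaklyCompactMap (fun a : 𝔄 => dotLmap μ a))
    (Φ : (𝔄 →L[ℂ] ℂ) →L[ℂ] ℂ) (hΦ : ‖Φ‖ ≤ 1) :
    ∃ ξ : 𝔄 →L[ℂ] ℂ, ∀ Ψ : (𝔄 →L[ℂ] ℂ) →L[ℂ] ℂ, Φ (Ψ.comp (dotLmap μ)) = Ψ ξ := by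
  classical
  let E := 𝔄 →L[ℂ] ℂ
  set T : 𝔄 → (𝔄 →L[ℂ] ℂ) := fun a => dotLmap μ a with hT
  set K := closure ((toWeakSpace ℂ E) '' (T '' closedBall (0:𝔄) 1)) with hK
  have hKcomp : IsCompact K := by unfold K T E; exact hwc
  set e : WeakSpace ℂ E → ((E →L[ℂ] ℂ) → ℂ) :=
    fun ξ Ψ => Ψ ((toWeakSpace ℂ E).symm ξ) with he
  have hecont : Continuous e := by
    apply continuous_pi
    intro Ψ
    exact WeakBilin.eval_continuous ((topDualPairing ℂ E).flip) Ψ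
  have hKc : IsCompact (e '' K) := hKcomp.image hecont
  have hKcl : IsClosed (e '' K) := hKc.isClosed
  set g : (E →L[ℂ] ℂ) → ℂ := fun Ψ => Φ (Ψ.comp (dotLmap μ)) with hg
  set S : Set ((E →L[ℂ] ℂ) → ℂ) :=
    e '' ((toWeakSpace ℂ E) '' (T '' closedBall (0:𝔄) 1)) with hS
  have hSsub : S ⊆ e '' K := Set.image_mono subset_closure
  have hgS : g ∈ closure S := by
    rw [mem_closure_iff_nhds]
    intro t ht
    rw [nhds_pi, Filter.mem_pi] at ht
    obtain ⟨I, hIfin, V, hV, hVt⟩ := ht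
    have hδ : ∀ Ψ : E →L[ℂ] ℂ, ∃ δ : ℝ, 0 < δ ∧ (Ψ ∈ I → Metric.ball (g Ψ) δ ⊆ V Ψ) := by
      intro Ψ
      by_cases h : Ψ ∈ I
      · obtain ⟨δ, hδ0, hδb⟩ := Metric.mem_nhds_iff.mp (hV Ψ)
        exact ⟨δ, hδ0, fun _ => hδb⟩
      · exact ⟨1, one_pos, fun h' => absurd h' h⟩
    choose δ hδ0 hδball using hδ
    set sI : Finset (E →L[ℂ] ℂ) := hIfin.toFinset with hsI
    rcases sI.eq_empty_or_nonempty with hemp | hne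
    · refine ⟨e ((toWeakSpace ℂ E) (T 0)), ?_, ?_⟩
      · apply hVt
        intro Ψ hΨ
        exfalso
        have : Ψ ∈ sI := hIfin.mem_toFinset.mpr hΨ
        simp [hemp] at this
      · exact ⟨_, ⟨_, ⟨0, by simp, rfl⟩, rfl⟩, rfl⟩
    · set ε : ℝ := sI.inf' hne δ with hε
      have hεpos : 0 < ε := by
        rw [hε, Finset.lt_inf'_iff]
        exact fun Ψ _ => hδ0 Ψ
      obtain ⟨a, ha1, hap⟩ :=
        goldstine_finset Φ hΦ (sI.image fun Ψ => Ψ.comp (dotLmap μ)) hεpos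
      refine ⟨e ((toWeakSpace ℂ E) (T a)), ?_, ?_⟩
      · apply hVt
        intro Ψ hΨ
        apply hδball Ψ hΨ
        have hmem : Ψ.comp (dotLmap μ) ∈ sI.image fun Ψ => Ψ.comp (dotLmap μ) :=
          Finset.mem_image_of_mem _ (hIfin.mem_toFinset.mpr hΨ)
        have h1 := hap _ hmem
        have h2 : ε ≤ δ Ψ := Finset.inf'_le δ (hIfin.mem_toFinset.mpr hΨ)
        have h3 : (Ψ.comp (dotLmap μ)) a = Ψ (T a) := rfl
        rw [Metric.mem_ball]
        have : dist (e ((toWeakSpace ℂ E) (T a)) Ψ) (g Ψ) = ‖Φ (Ψ.comp (dotLmap μ)) - (Ψ.comp (dotLmap μ)) a‖ := by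
          rw [dist_eq_norm, norm_sub_rev]
          rfl
        rw [this]
        exact lt_of_lt_of_le h1 h2
      · exact ⟨_, ⟨_, ⟨a, by simpa [dist_eq_norm] using ha1, rfl⟩, rfl⟩, rfl⟩
  have hgK : g ∈ e '' K := closure_minimal hSsub hKcl hgS
  obtain ⟨ξ', _, hξ'⟩ := hgK
  refine ⟨(toWeakSpace ℂ E).symm ξ', fun Ψ0 => ?_⟩
  have h4 := congrFun hξ' Ψ0
  simp only [he, hg] at h4
  exact h4.symm

lemma arens_key (μ : 𝔄 →L[ℂ] ℂ)
    (hwc : IsWeaklyCompactMap (fun a : 𝔄 => dotLmap μ a))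
    (Φ Ψ : (𝔄 →L[ℂ] ℂ) →L[ℂ] ℂ) :
    Φ (Ψ.comp (dotLmap μ)) = Ψ (Φ.comp (dotRmap μ)) := by
  suffices h : ∀ Φ : (𝔄 →L[ℂ] ℂ) →L[ℂ] ℂ, ‖Φ‖ ≤ 1 →
      ∀ Ψ : (𝔄 →L[ℂ] ℂ) →L[ℂ] ℂ, Φ (Ψ.comp (dotLmap μ)) = Ψ (Φ.comp (dotRmap μ)) by
    have hc : (0:ℝ) < ‖Φ‖ + 1 := by positivity
    set c : ℂ := ((‖Φ‖ + 1 : ℝ) : ℂ) with hcc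
    have hc0 : c ≠ 0 := by
      rw [hcc]; exact_mod_cast hc.ne'
    have hΦ' : ‖c⁻¹ • Φ‖ ≤ 1 := by
      have h5 : ‖c⁻¹ • Φ‖ ≤ ‖c⁻¹‖ * ‖Φ‖ := ContinuousLinearMap.opNorm_smul_le _ _
      have hcn : ‖c⁻¹‖ = (‖Φ‖ + 1)⁻¹ := by
        rw [norm_inv, hcc, Complex.norm_real, Real.norm_eq_abs, abs_of_pos hc]
      rw [hcn] at h5
      refine h5.trans ?_
      rw [inv_mul_le_iff₀ hc, mul_one]
      linarith
    have hkey := h (c⁻¹ • Φ) hΦ' Ψ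
    rw [ContinuousLinearMap.smul_apply, ContinuousLinearMap.smul_comp, map_smul,
      smul_eq_mul, smul_eq_mul] at hkey
    exact mul_left_cancel₀ (inv_ne_zero hc0) hkey
  intro Φ hΦ Ψ
  obtain ⟨ξ, hξ⟩ := arens_norm_le_one μ hwc Φ hΦ
  have hξ_eq : ξ = Φ.comp (dotRmap μ) := by
    ext b
    have h2 : (NormedSpace.inclusionInDoubleDual ℂ 𝔄 b).comp (dotLmap μ) = dotRmap μ b := by
      ext a
      simp [dotLmap, dotRmap, NormedSpace.inclusionInDoubleDual]
    have h1 := hξ (NormedSpace.inclusionInDoubleDual ℂ 𝔄 b)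
    rw [h2] at h1
    have h3 : (NormedSpace.inclusionInDoubleDual ℂ 𝔄 b) ξ = ξ b := rfl
    rw [h3] at h1
    rw [← h1]
    rfl
  rw [hξ Ψ, hξ_eq]

/-- Let `𝔄` be a Banach algebra and `X` a norm-closed introverted
sub-bimodule of `𝔄*` contained in `WAP(𝔄)`.  Then the two Arens products
`⟨Φ□Ψ, μ⟩ = ⟨Φ, Ψ·μ⟩` and `⟨Φ◇Ψ, μ⟩ = ⟨Ψ, μ·Φ⟩` on `𝔄**` agree on `X` and descend to a
well-defined product on `X* = 𝔄**/X^⊥`, for which `X*` is a dual Banach algebra: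
multiplication is separately weak*-continuous (each one-sided multiplication is
represented by evaluation at an element of `X`). -/
theorem introverted_wap_submodule_arens_products_agree
    [CompleteSpace 𝔄]
    (X : Submodule ℂ (𝔄 →L[ℂ] ℂ)) (hXcl : IsClosed (X : Set (𝔄 →L[ℂ] ℂ)))
    (hXmod : ∀ μ ∈ X, ∀ a : 𝔄, dotLmap μ a ∈ X ∧ dotRmap μ a ∈ X)
    (hXintro : ∀ μ ∈ X, ∀ Φ : (𝔄 →L[ℂ] ℂ) →L[ℂ] ℂ,
      Φ.comp (dotLmap μ) ∈ X ∧ Φ.comp (dotRmap μ) ∈ X)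
    (hXwap : ∀ μ ∈ X, IsWeaklyCompactMap (fun a : 𝔄 => dotLmap μ a)) :
    -- the two Arens products agree on X, so they induce the same product on X*
    (∀ Φ Ψ : (𝔄 →L[ℂ] ℂ) →L[ℂ] ℂ, ∀ μ ∈ X,
      Φ (Ψ.comp (dotLmap μ)) = Ψ (Φ.comp (dotRmap μ))) ∧
    -- the induced product on X* = 𝔄**/X^⊥ is well defined
    (∀ Φ Φ' Ψ Ψ' : (𝔄 →L[ℂ] ℂ) →L[ℂ] ℂ,
      (∀ μ ∈ X, Φ μ = Φ' μ) → (∀ μ ∈ X, Ψ μ = Ψ' μ) →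
      ∀ μ ∈ X, Φ (Ψ.comp (dotLmap μ)) = Φ' (Ψ'.comp (dotLmap μ))) ∧
    -- X* is a dual Banach algebra: multiplication is separately weak*-continuous
    (∀ Φ : (𝔄 →L[ℂ] ℂ) →L[ℂ] ℂ, ∀ μ ∈ X,
      (∃ ν ∈ X, ∀ Ψ : (𝔄 →L[ℂ] ℂ) →L[ℂ] ℂ, Φ (Ψ.comp (dotLmap μ)) = Ψ ν) ∧
      (∃ ν ∈ X, ∀ Ψ : (𝔄 →L[ℂ] ℂ) →L[ℂ] ℂ, Ψ (Φ.comp (dotLmap μ)) = Ψ ν)) := by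
  have key : ∀ μ ∈ X, ∀ Φ Ψ : (𝔄 →L[ℂ] ℂ) →L[ℂ] ℂ,
      Φ (Ψ.comp (dotLmap μ)) = Ψ (Φ.comp (dotRmap μ)) :=
    fun μ hμ Φ Ψ => arens_key μ (hXwap μ hμ) Φ Ψ
  refine ⟨fun Φ Ψ μ hμ => key μ hμ Φ Ψ, ?_, ?_⟩
  · intro Φ Φ' Ψ Ψ' hΦ hΨ μ hμ
    have h1 : Ψ.comp (dotLmap μ) ∈ X := (hXintro μ hμ Ψ).1
    have h2 : Φ'.comp (dotRmap μ) ∈ X := (hXintro μ hμ Φ').2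
    calc Φ (Ψ.comp (dotLmap μ)) = Φ' (Ψ.comp (dotLmap μ)) := hΦ _ h1
      _ = Ψ (Φ'.comp (dotRmap μ)) := key μ hμ Φ' Ψ
      _ = Ψ' (Φ'.comp (dotRmap μ)) := hΨ _ h2
      _ = Φ' (Ψ'.comp (dotLmap μ)) := (key μ hμ Φ' Ψ').symm
  · intro Φ μ hμ
    constructor
    · exact ⟨Φ.comp (dotRmap μ), (hXintro μ hμ Φ).2, fun Ψ => key μ hμ Φ Ψ⟩
    · exact ⟨Φ.comp (dotLmap μ), (hXintro μ hμ Φ).1, fun Ψ => rfl⟩
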